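/- arXiv:hep-th/9310201 — 2 statements merged into one kernel-verified Lean document; each statement's English description precedes it below -/
import Mathlib

section
/- Let X be a topological space, ι a nonempty directed preordered index set, and for each i ∈ ι let X_i be a compact Hausdorff topological space with a continuous surjection p_i : X → X_i; for i ≤ j let π_{ij} : X_j → X_i be continuous maps satisfying π_{ij} ∘ p_j = p_i. Suppose μ_i is a finite Borel measure on X_i for each i, and the family is consistent: for i ≤ j, the pushforward of μ_j along π_{ij} equals μ_i. Then there exists a unique continuous linear functional Λ on the closure (in the supremum norm, inside the Banach space of bounded continuous complex-valued functions on X) of the linear span of the cylinder functions {F ∘ p_i : i ∈ ι, F ∈ C(X_i, ℂ)}, such that Λ(F ∘ p_i) = ∫_{X_i} F dμ_i for all i and all F ∈ C(X_i, ℂ); moreover, for any fixed i₀ ∈ ι, ‖Λ‖ ≤ μ_{i₀}(X_{i₀}). -/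
open MeasureTheory BoundedContinuousFunction

set_option maxHeartbeats 1000000 in
/-- A consistent family of finite Borel measures on a directed
system of compact Hausdorff spaces `X i` with continuous surjections `p i : X → X i`
determines a unique continuous linear functional on the sup-norm closure of the span
of cylinder functions on `X`, integrating each cylinder function against the
corresponding measure; its norm is bounded by the common total mass. -/
theorem generalized_measure_from_consistent_measures
    {X : Type*} [TopologicalSpace X]
    {ι : Type*} [Preorder ι] [Nonempty ι] [IsDirected ι (· ≤ ·)]
    (Xi : ι → Type*) [∀ i, TopologicalSpace (Xi i)]
    [∀ i, CompactSpace (Xi i)] [∀ i, T2Space (Xi i)]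
    [∀ i, MeasurableSpace (Xi i)] [∀ i, BorelSpace (Xi i)]
    (p : ∀ i, C(X, Xi i)) (hp : ∀ i, Function.Surjective (p i))
    (π : ∀ i j, i ≤ j → C(Xi j, Xi i))
    (hπ : ∀ (i j : ι) (h : i ≤ j), (π i j h).comp (p j) = p i)
    (μ : ∀ i, Measure (Xi i)) [∀ i, IsFiniteMeasure (μ i)]
    (hcons : ∀ (i j : ι) (h : i ≤ j), (μ j).map (π i j h) = μ i)
    (i₀ : ι) :
    ∃ Λ : (Submodule.span ℂ {f : X →ᵇ ℂ |
        ∃ (i : ι) (F : Xi i →ᵇ ℂ), f = F.compContinuous (p i)}).topologicalClosure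
        →L[ℂ] ℂ,
      (∀ (i : ι) (F : Xi i →ᵇ ℂ),
        Λ ⟨F.compContinuous (p i),
            Submodule.le_topologicalClosure _
              (Submodule.subset_span ⟨i, F, rfl⟩)⟩ = ∫ x, F x ∂(μ i)) ∧
      ‖Λ‖ ≤ ((μ i₀) Set.univ).toReal ∧
      ∀ Λ' : (Submodule.span ℂ {f : X →ᵇ ℂ |
          ∃ (i : ι) (F : Xi i →ᵇ ℂ), f = F.compContinuous (p i)}).topologicalClosure
          →L[ℂ] ℂ,
        (∀ (i : ι) (F : Xi i →ᵇ ℂ),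
          Λ' ⟨F.compContinuous (p i),
              Submodule.le_topologicalClosure _
                (Submodule.subset_span ⟨i, F, rfl⟩)⟩ = ∫ x, F x ∂(μ i)) →
        Λ' = Λ := by
  classical
  set S : Set (X →ᵇ ℂ) :=
    {f : X →ᵇ ℂ | ∃ (i : ι) (F : Xi i →ᵇ ℂ), f = F.compContinuous (p i)} with hSdef
  set M : Submodule ℂ (X →ᵇ ℂ) := Submodule.span ℂ S with hMdef
  -- pointwise form of the compatibility
  have hπ' : ∀ (i j : ι) (h : i ≤ j) (x : X), π i j h (p j x) = p i x := by
    intro i j h x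
    exact DFunLike.congr_fun (hπ i j h) x
  -- change of variables for integrals
  have pull : ∀ (i k : ι) (h : i ≤ k) (F : Xi i →ᵇ ℂ),
      ∫ x, F x ∂(μ i) = ∫ y, F (π i k h y) ∂(μ k) := by
    intro i k h F
    rw [← hcons i k h,
      integral_map (π i k h).continuous.measurable.aemeasurable
        F.continuous.aestronglyMeasurable]
  -- all total masses agree
  have mass : ∀ i : ι, μ i Set.univ = μ i₀ Set.univ := by
    intro i
    obtain ⟨k, hik, hi0k⟩ := directed_of (· ≤ ·) i i₀
    have h1 : μ i Set.univ = μ k Set.univ := by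
      rw [← hcons i k hik,
        Measure.map_apply (π i k hik).continuous.measurable MeasurableSet.univ,
        Set.preimage_univ]
    have h2 : μ i₀ Set.univ = μ k Set.univ := by
      rw [← hcons i₀ k hi0k,
        Measure.map_apply (π i₀ k hi0k).continuous.measurable MeasurableSet.univ,
        Set.preimage_univ]
    rw [h1, h2]
  -- well-definedness of the integral against the representing measure
  have key : ∀ (i j : ι) (F : Xi i →ᵇ ℂ) (G : Xi j →ᵇ ℂ),
      F.compContinuous (p i) = G.compContinuous (p j) →
      ∫ x, F x ∂(μ i) = ∫ x, G x ∂(μ j) := by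
    intro i j F G hFG
    obtain ⟨k, hik, hjk⟩ := directed_of (· ≤ ·) i j
    have hfun : ∀ y : Xi k, F (π i k hik y) = G (π j k hjk y) := by
      intro y
      obtain ⟨x, rfl⟩ := hp k y
      rw [hπ' i k hik x, hπ' j k hjk x]
      exact DFunLike.congr_fun hFG x
    rw [pull i k hik F, pull j k hjk G]
    exact integral_congr_ae (Filter.Eventually.of_forall hfun)
  -- the span consists of cylinder functions
  have hS : ∀ f ∈ M, ∃ (i : ι) (F : Xi i →ᵇ ℂ), f = F.compContinuous (p i) := by
    intro f hf
    induction hf using Submodule.span_induction with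
    | mem x hx => exact hx
    | zero =>
      exact ⟨i₀, 0, by ext x; simp⟩
    | add x y hx hy ihx ihy =>
      obtain ⟨i, F, rfl⟩ := ihx
      obtain ⟨j, G, rfl⟩ := ihy
      obtain ⟨k, hik, hjk⟩ := directed_of (· ≤ ·) i j
      refine ⟨k, F.compContinuous (π i k hik) + G.compContinuous (π j k hjk), ?_⟩
      ext x
      simp [hπ' i k hik x, hπ' j k hjk x]
    | smul c x hx ihx =>
      obtain ⟨i, F, rfl⟩ := ihx
      exact ⟨i, c • F, by ext x; simp⟩
  choose idx Fn hFn using fun f : M => hS f f.2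
  -- the value of the functional on any element of the span
  have val_eq : ∀ (f : M) (i : ι) (F : Xi i →ᵇ ℂ),
      (f : X →ᵇ ℂ) = F.compContinuous (p i) →
      ∫ x, Fn f x ∂(μ (idx f)) = ∫ x, F x ∂(μ i) := by
    intro f i F hf
    exact key _ _ _ _ ((hFn f).symm.trans hf)
  -- the linear functional on the span
  set Λ₀ : M →ₗ[ℂ] ℂ :=
    { toFun := fun f => ∫ x, Fn f x ∂(μ (idx f))
      map_add' := by
        intro f g
        obtain ⟨k, hik, hjk⟩ := directed_of (· ≤ ·) (idx f) (idx g)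
        have hval : ((f + g : M) : X →ᵇ ℂ) =
            ((Fn f).compContinuous (π (idx f) k hik) +
              (Fn g).compContinuous (π (idx g) k hjk)).compContinuous (p k) := by
          have hfv := hFn f
          have hgv := hFn g
          ext x
          simp [hfv, hgv, hπ' (idx f) k hik x, hπ' (idx g) k hjk x]
        show (∫ x, Fn (f + g) x ∂(μ (idx (f + g)))) =
            (∫ x, Fn f x ∂(μ (idx f))) + ∫ x, Fn g x ∂(μ (idx g))
        rw [val_eq (f + g) k _ hval]
        have h1 : Integrable (fun y => Fn f (π (idx f) k hik y)) (μ k) :=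
          ((Fn f).compContinuous (π (idx f) k hik)).integrable (μ k)
        have h2 : Integrable (fun y => Fn g (π (idx g) k hjk y)) (μ k) :=
          ((Fn g).compContinuous (π (idx g) k hjk)).integrable (μ k)
        have : ∫ y, ((Fn f).compContinuous (π (idx f) k hik) +
              (Fn g).compContinuous (π (idx g) k hjk)) y ∂(μ k) =
            (∫ y, Fn f (π (idx f) k hik y) ∂(μ k)) +
            ∫ y, Fn g (π (idx g) k hjk y) ∂(μ k) := by
          simpa using integral_add h1 h2
        rw [this, ← pull (idx f) k hik (Fn f), ← pull (idx g) k hjk (Fn g)]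
      map_smul' := by
        intro c f
        have hval : ((c • f : M) : X →ᵇ ℂ) = (c • Fn f).compContinuous (p (idx f)) := by
          have hfv := hFn f
          ext x
          simp [hfv]
        show (∫ x, Fn (c • f) x ∂(μ (idx (c • f)))) =
            c • ∫ x, Fn f x ∂(μ (idx f))
        rw [val_eq (c • f) (idx f) _ hval]
        exact integral_const_mul c _ } with hΛ₀def
  -- norms of cylinder functions
  have norm_cyl : ∀ (i : ι) (F : Xi i →ᵇ ℂ), ‖F.compContinuous (p i)‖ = ‖F‖ := by
    intro i F
    refine le_antisymm ?_ ?_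
    · rw [norm_le (norm_nonneg F)]
      intro x
      exact F.norm_coe_le_norm (p i x)
    · rw [norm_le (norm_nonneg _)]
      intro y
      obtain ⟨x, rfl⟩ := hp i y
      exact (F.compContinuous (p i)).norm_coe_le_norm x
  -- the bound
  have bound : ∀ f : M, ‖Λ₀ f‖ ≤ ((μ i₀) Set.univ).toReal * ‖f‖ := by
    intro f
    have h1 : ‖Λ₀ f‖ ≤ ((μ (idx f)) Set.univ).toReal * ‖Fn f‖ :=
      (Fn f).norm_integral_le_mul_norm (μ (idx f))
    have h2 : ‖Fn f‖ = ‖f‖ := by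
      have := norm_cyl (idx f) (Fn f)
      rw [← hFn f] at this
      exact this.symm ▸ rfl
    rw [mass (idx f)] at h1
    calc ‖Λ₀ f‖ ≤ ((μ i₀) Set.univ).toReal * ‖Fn f‖ := h1
      _ = ((μ i₀) Set.univ).toReal * ‖f‖ := by rw [h2]
  set Λ₁ : M →L[ℂ] ℂ := Λ₀.mkContinuous (((μ i₀) Set.univ).toReal) bound with hΛ₁def
  -- the inclusion of the span into its closure
  set e : M →L[ℂ] M.topologicalClosure :=
    (Submodule.inclusion M.le_topologicalClosure).mkContinuous 1
      (fun x => by rw [one_mul]; exact le_rfl) with hedef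
  have h_e : ∀ x : M, ‖x‖ ≤ (1 : NNReal) * ‖e x‖ := by
    intro x; rw [NNReal.coe_one, one_mul]; exact le_rfl
  have h_dense : DenseRange e := by
    intro x
    have hx : (x : X →ᵇ ℂ) ∈ closure (M : Set (X →ᵇ ℂ)) := by
      have hx2 := x.2
      rwa [← Submodule.topologicalClosure_coe]
    rw [closure_subtype]
    have himg : Subtype.val '' Set.range e = (M : Set (X →ᵇ ℂ)) := by
      ext g
      constructor
      · rintro ⟨y, ⟨z, rfl⟩, rfl⟩
        exact z.2
      · intro hg
        exact ⟨e ⟨g, hg⟩, ⟨⟨g, hg⟩, rfl⟩, rfl⟩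
    rwa [himg]
  have h_ui : IsUniformInducing e := by
    have : Isometry e := fun x y => rfl
    exact this.isUniformInducing
  set Λ : M.topologicalClosure →L[ℂ] ℂ := Λ₁.extend e with hΛdef
  have hΛe : ∀ f : M, Λ (e f) = Λ₁ f := fun f =>
    ContinuousLinearMap.extend_eq (f := Λ₁) (e := e) h_dense h_ui f
  have spec : ∀ (i : ι) (F : Xi i →ᵇ ℂ),
      Λ ⟨F.compContinuous (p i),
          Submodule.le_topologicalClosure _ (Submodule.subset_span ⟨i, F, rfl⟩)⟩ =
        ∫ x, F x ∂(μ i) := by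
    intro i F
    set f : M := ⟨F.compContinuous (p i), Submodule.subset_span ⟨i, F, rfl⟩⟩ with hfdef
    have he : e f = ⟨F.compContinuous (p i),
        Submodule.le_topologicalClosure _ (Submodule.subset_span ⟨i, F, rfl⟩)⟩ := by
      apply Subtype.ext; rfl
    rw [← he, hΛe f]
    exact val_eq f i F rfl
  refine ⟨Λ, spec, ?_, ?_⟩
  · have := ContinuousLinearMap.opNorm_extend_le (f := Λ₁) (e := e) h_dense h_e
    have h1 : ‖Λ‖ ≤ 1 * ‖Λ₁‖ := by
      simpa [hΛdef] using this
    have h2 : ‖Λ₁‖ ≤ ((μ i₀) Set.univ).toReal :=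
      Λ₀.mkContinuous_norm_le ENNReal.toReal_nonneg bound
    calc ‖Λ‖ ≤ 1 * ‖Λ₁‖ := h1
      _ = ‖Λ₁‖ := one_mul _
      _ ≤ ((μ i₀) Set.univ).toReal := h2
  · intro Λ' hΛ'
    have : Λ'.comp e = Λ₁ := by
      ext f
      have he : e f = ⟨(Fn f).compContinuous (p (idx f)),
          Submodule.le_topologicalClosure _
            (Submodule.subset_span ⟨idx f, Fn f, rfl⟩)⟩ := by
        apply Subtype.ext
        exact hFn f
      simp only [ContinuousLinearMap.comp_apply]
      rw [he, hΛ' (idx f) (Fn f)]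
      rfl
    exact (ContinuousLinearMap.extend_unique (f := Λ₁) (e := e) h_dense h_ui Λ' this).symm
end

section
/- Let K be a compact Hausdorff topological group with normalized Haar (probability) measure μ, acting continuously on a compact Hausdorff space X, and let M : C(X, ℂ) → C(X, ℂ) be the averaging operator (Mf)(x) = ∫_K f(k • x) dμ(k). Let S ⊆ C(X, ℂ) be a set of continuous functions with M(S) ⊆ S. If f ∈ C(X, ℂ) is K-invariant (f(k • x) = f(x) for all k ∈ K, x ∈ X) and f lies in the closure of S in the supremum norm, then f lies in the closure, in the supremum norm, of the set of K-invariant elements of S. -/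
open MeasureTheory
open scoped ENNReal NNReal

/-- On a compact group, a left-invariant probability measure is also
right-invariant. -/
lemma aux_isMulRightInvariant
    {K : Type*} [Group K] [TopologicalSpace K] [IsTopologicalGroup K]
    [CompactSpace K] [T2Space K] [MeasurableSpace K] [BorelSpace K]
    (μ : Measure K) [μ.IsMulLeftInvariant] [IsProbabilityMeasure μ] :
    μ.IsMulRightInvariant := by
  haveI hHaar : μ.IsHaarMeasure :=
    Measure.isHaarMeasure_of_isCompact_nonempty_interior μ Set.univ isCompact_univ
      (by simp) (by simp) (by simp)
  constructor
  intro g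
  set μ' := Measure.map (· * g) μ with hμ'
  haveI : IsProbabilityMeasure μ' :=
    Measure.isProbabilityMeasure_map (measurable_mul_const g).aemeasurable
  haveI : μ'.Regular := Measure.Regular.map (Homeomorph.mulRight g)
  have h := Measure.isMulLeftInvariant_eq_smul_of_regular μ' μ
  have hc : (Measure.haarScalarFactor μ' μ : ℝ≥0∞) = 1 := by
    have h1 : μ' Set.univ = 1 := measure_univ
    have h2 : (Measure.haarScalarFactor μ' μ • μ) Set.univ
        = (Measure.haarScalarFactor μ' μ : ℝ≥0∞) := by
      rw [Measure.smul_apply, measure_univ, ENNReal.smul_def, smul_eq_mul, mul_one]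
    rw [h] at h1
    rw [h2] at h1
    exact h1
  have : μ' = μ := by
    rw [h]
    ext s hs
    simp [Measure.smul_apply, ENNReal.smul_def, hc]
  exact this

/-- If `S ⊆ C(X, ℂ)` is stable under the averaging operator `M`
over the action of a compact Hausdorff group `K` (with normalized Haar probability
measure `μ`) and `f` is a `K`-invariant function lying in the (sup-norm) closure
of `S`, then `f` lies in the closure of the set of `K`-invariant elements of `S`. -/
theorem invariant_limit_of_invariant_approximants
    {K : Type*} [Group K] [TopologicalSpace K] [IsTopologicalGroup K]
    [CompactSpace K] [T2Space K] [MeasurableSpace K] [BorelSpace K]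
    (μ : Measure K) [μ.IsMulLeftInvariant] [IsProbabilityMeasure μ]
    {X : Type*} [TopologicalSpace X] [CompactSpace X] [T2Space X]
    [MulAction K X] [ContinuousSMul K X]
    (M : C(X, ℂ) → C(X, ℂ))
    (hM : ∀ (f : C(X, ℂ)) (x : X), M f x = ∫ k, f (k • x) ∂μ)
    (S : Set C(X, ℂ)) (hS : ∀ f ∈ S, M f ∈ S)
    (f : C(X, ℂ)) (hf : ∀ (k : K) (x : X), f (k • x) = f x)
    (hfS : f ∈ closure S) :
    f ∈ closure {g : C(X, ℂ) | g ∈ S ∧ ∀ (k : K) (x : X), g (k • x) = g x} := by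
  haveI : μ.IsMulRightInvariant := aux_isMulRightInvariant μ
  rw [Metric.mem_closure_iff] at hfS ⊢
  intro ε hε
  obtain ⟨g, hgS, hgd⟩ := hfS ε hε
  refine ⟨M g, ⟨hS g hgS, ?_⟩, ?_⟩
  · -- invariance of `M g`
    intro k x
    rw [hM, hM]
    have : ∀ k' : K, g (k' • k • x) = g ((k' * k) • x) := by
      intro k'; rw [mul_smul]
    simp_rw [this]
    exact integral_mul_right_eq_self (fun k' => g (k' • x)) k
  · -- distance estimate
    have key : dist f (M g) ≤ dist f g := by
      rw [ContinuousMap.dist_le dist_nonneg]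
      intro x
      rw [hM]
      have hfx : f x = ∫ _ : K, f x ∂μ := by simp
      rw [dist_eq_norm, hfx, ← integral_sub (integrable_const _) ?_]
      · calc ‖∫ k, (f x - g (k • x)) ∂μ‖
            ≤ dist f g * (μ Set.univ).toReal := by
              apply norm_integral_le_of_norm_le_const
              filter_upwards with k
              have h1 : f x = f (k • x) := (hf k x).symm
              rw [h1, ← dist_eq_norm]
              exact ContinuousMap.dist_apply_le_dist _
          _ = dist f g := by simp
      · apply Continuous.integrable_of_hasCompactSupport
        · exact g.continuous.comp (continuous_id.smul continuous_const)
        · exact HasCompactSupport.of_compactSpace _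
    exact lt_of_le_of_lt key hgd
end
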